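/- Let α < β be real numbers, A ∈ ℝ^{n×n}, g ∈ ℝ^{n×l}, Y ∈ ℝ^{l×n}, W¹ ∈ ℝ^{m×n}, W_min ∈ ℝ^{n×m}, let S ∈ ℝ^{n×n} be symmetric positive definite with s̲·I ⪯ S for some s̲ > 0, and let μ > 0. Define R̄ = AS + SAᵀ + gY + Yᵀgᵀ − (2αβ/(β−α)²)·W_min·W_minᵀ and R̃ = ((α+β)/(β−α))·W_min + (β−α)·S·W¹ᵀ. If the symmetric block matrix [[−μ·Iₙ, S, 0], [S, R̄, R̃], [0, R̃ᵀ, −2·I_m]] ⪯ 0, then with P = S⁻¹, H = Y·S⁻¹ and γ = s̲/μ, the block matrix [[(A + gH)ᵀP + P(A + gH) + γP − 2αβ·W¹ᵀW¹, P·W_min + (α+β)·W¹ᵀ], [(P·W_min + (α+β)·W¹ᵀ)ᵀ, −2·I_m]] ⪯ 0. -/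

import Mathlib

open Matrix

private lemma psd_smul {k : ℕ} {M : Matrix (Fin k) (Fin k) ℝ} (h : M.PosSemidef)
    {c : ℝ} (hc : 0 ≤ c) : (c • M).PosSemidef := by
  constructor
  · have := h.1.eq
    rw [Matrix.conjTranspose_eq_transpose_of_trivial] at this
    simp [Matrix.IsHermitian, conjTranspose_smul, this]
  · intro x
    exact (h.smul hc).2 x

/-- the convex LMI in `(S, Y, μ)` implies, with `P = S⁻¹`, `H = Y S⁻¹`
and `γ = s̲/μ`, the non-convex matrix inequality of the controlled Hopfield system. -/
theorem LMI_implies_controlled_condition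
    (n l m : ℕ) (α β : ℝ) (hαβ : α < β)
    (A : Matrix (Fin n) (Fin n) ℝ)
    (g : Matrix (Fin n) (Fin l) ℝ) (Y : Matrix (Fin l) (Fin n) ℝ)
    (W1 : Matrix (Fin m) (Fin n) ℝ) (Wmin : Matrix (Fin n) (Fin m) ℝ)
    (S : Matrix (Fin n) (Fin n) ℝ) (hS : S.PosDef)
    (s₁ μ : ℝ) (hs₁ : 0 < s₁) (hμ : 0 < μ)
    (hSlo : (S - s₁ • (1 : Matrix (Fin n) (Fin n) ℝ)).PosSemidef)
    (hLMI : (-(Matrix.fromBlocks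
        (Matrix.fromBlocks (-μ • (1 : Matrix (Fin n) (Fin n) ℝ)) S
          S (A * S + S * Aᵀ + g * Y + Yᵀ * gᵀ
              - (2 * α * β / (β - α) ^ 2) • (Wmin * Wminᵀ)))
        (Matrix.fromRows (0 : Matrix (Fin n) (Fin m) ℝ)
          (((α + β) / (β - α)) • Wmin + (β - α) • (S * W1ᵀ)))
        (Matrix.fromCols (0 : Matrix (Fin m) (Fin n) ℝ)
          ((((α + β) / (β - α)) • Wmin + (β - α) • (S * W1ᵀ))ᵀ))
        (-(2 : ℝ) • (1 : Matrix (Fin m) (Fin m) ℝ)))).PosSemidef) :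
    (-(Matrix.fromBlocks
        ((A + g * (Y * S⁻¹))ᵀ * S⁻¹ + S⁻¹ * (A + g * (Y * S⁻¹))
            + (s₁ / μ) • S⁻¹ - (2 * α * β) • (W1ᵀ * W1))
        (S⁻¹ * Wmin + (α + β) • W1ᵀ)
        ((S⁻¹ * Wmin + (α + β) • W1ᵀ)ᵀ)
        (-(2 : ℝ) • (1 : Matrix (Fin m) (Fin m) ℝ)))).PosSemidef := by
  have hβα : (0:ℝ) < β - α := sub_pos.2 hαβ
  have hd : β - α ≠ 0 := ne_of_gt hβα
  have hμ' : μ ≠ 0 := ne_of_gt hμ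
  have hdet : IsUnit S.det := (Matrix.isUnit_iff_isUnit_det S).1 hS.isUnit
  have hSP : S * S⁻¹ = 1 := Matrix.mul_nonsing_inv S hdet
  have hPS : S⁻¹ * S = 1 := Matrix.nonsing_inv_mul S hdet
  have hSt : Sᵀ = S := by
    have := hS.isHermitian.eq
    rwa [Matrix.conjTranspose_eq_transpose_of_trivial] at this
  have hPt : S⁻¹ᵀ = S⁻¹ := by rw [Matrix.transpose_nonsing_inv, hSt]
  have hPSx : ∀ {k : Type} (X : Matrix (Fin n) k ℝ), S⁻¹ * (S * X) = X := by
    intro k X; rw [← Matrix.mul_assoc, hPS, Matrix.one_mul]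
  have hSPx : ∀ {k : Type} (X : Matrix (Fin n) k ℝ), S * (S⁻¹ * X) = X := by
    intro k X; rw [← Matrix.mul_assoc, hSP, Matrix.one_mul]
  have hd2 : (-(α * β * 2) + α ^ 2 + β ^ 2) ≠ 0 := by
    have h3 : -(α * β * 2) + α ^ 2 + β ^ 2 = (β - α) ^ 2 := by ring
    rw [h3]; exact pow_ne_zero _ hd
  have hd3 : (-α + β) ≠ 0 := by rw [neg_add_eq_sub]; exact hd
  set Rb : Matrix (Fin n) (Fin n) ℝ :=
    A * S + S * Aᵀ + g * Y + Yᵀ * gᵀ - (2 * α * β / (β - α) ^ 2) • (Wmin * Wminᵀ) with hRb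
  set Rt : Matrix (Fin n) (Fin m) ℝ :=
    ((α + β) / (β - α)) • Wmin + (β - α) • (S * W1ᵀ) with hRtdef
  -- Step 1 : Schur step, congruence with U
  have hM2 : (-(fromBlocks (μ⁻¹ • (S * S) + Rb) Rt Rtᵀ
      (-(2 : ℝ) • (1 : Matrix (Fin m) (Fin m) ℝ)))).PosSemidef := by
    have h := hLMI.conjTranspose_mul_mul_same
      (fromBlocks (fromRows (μ⁻¹ • S) (1 : Matrix (Fin n) (Fin n) ℝ))
        (0 : Matrix (Fin n ⊕ Fin n) (Fin m) ℝ) 0 (1 : Matrix (Fin m) (Fin m) ℝ))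
    have hcalc : (fromBlocks (fromRows (μ⁻¹ • S) (1 : Matrix (Fin n) (Fin n) ℝ))
          (0 : Matrix (Fin n ⊕ Fin n) (Fin m) ℝ) 0 (1 : Matrix (Fin m) (Fin m) ℝ))ᴴ *
        (-(Matrix.fromBlocks
          (Matrix.fromBlocks (-μ • (1 : Matrix (Fin n) (Fin n) ℝ)) S S Rb)
          (Matrix.fromRows (0 : Matrix (Fin n) (Fin m) ℝ) Rt)
          (Matrix.fromCols (0 : Matrix (Fin m) (Fin n) ℝ) Rtᵀ)
          (-(2 : ℝ) • (1 : Matrix (Fin m) (Fin m) ℝ)))) *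
        (fromBlocks (fromRows (μ⁻¹ • S) (1 : Matrix (Fin n) (Fin n) ℝ))
          (0 : Matrix (Fin n ⊕ Fin n) (Fin m) ℝ) 0 (1 : Matrix (Fin m) (Fin m) ℝ))
        = -(fromBlocks (μ⁻¹ • (S * S) + Rb) Rt Rtᵀ
            (-(2 : ℝ) • (1 : Matrix (Fin m) (Fin m) ℝ))) := by
      rw [Matrix.mul_neg, Matrix.neg_mul, neg_inj]
      rw [Matrix.fromBlocks_conjTranspose,
        Matrix.conjTranspose_fromRows_eq_fromCols_conjTranspose]
      simp only [conjTranspose_smul, hS.isHermitian.eq, conjTranspose_one, conjTranspose_zero,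
        star_trivial]
      rw [Matrix.fromBlocks_multiply, Matrix.fromBlocks_multiply]
      simp only [Matrix.fromBlocks_mul_fromRows, Matrix.fromCols_mul_fromRows,
        Matrix.fromCols_mul_fromBlocks, Matrix.mul_zero, Matrix.zero_mul,
        Matrix.mul_one, Matrix.one_mul, add_zero, zero_add, Matrix.smul_mul,
        Matrix.mul_smul, smul_smul]
      have h1 : (-μ * μ⁻¹ : ℝ) = -1 := by field_simp
      simp [h1]
    rwa [hcalc] at h
  -- Step 2 : correction term is PSD
  have hC0 : (μ⁻¹ • (S * S) - (s₁ / μ) • S).PosSemidef := by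
    have heq : μ⁻¹ • ((S - s₁ • (1 : Matrix (Fin n) (Fin n) ℝ))ᴴ * (S - s₁ • 1)
        + s₁ • (S - s₁ • 1)) = μ⁻¹ • (S * S) - (s₁ / μ) • S := by
      rw [conjTranspose_sub, conjTranspose_smul, conjTranspose_one, hS.isHermitian.eq,
        star_trivial]
      simp only [sub_mul, mul_sub, smul_sub, smul_add, smul_smul, Matrix.mul_one,
        Matrix.one_mul, smul_mul_assoc, mul_smul_comm]
      match_scalars <;> ring
    rw [← heq]
    exact psd_smul ((posSemidef_conjTranspose_mul_self _).add (psd_smul hSlo hs₁.le))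
      (inv_nonneg.2 hμ.le)
  have hCorr : (fromBlocks (μ⁻¹ • (S * S) - (s₁ / μ) • S) (0 : Matrix (Fin n) (Fin m) ℝ)
      (0 : Matrix (Fin m) (Fin n) ℝ) (0 : Matrix (Fin m) (Fin m) ℝ)).PosSemidef := by
    have h := hC0.mul_mul_conjTranspose_same
      (fromRows (1 : Matrix (Fin n) (Fin n) ℝ) (0 : Matrix (Fin m) (Fin n) ℝ))
    rw [Matrix.conjTranspose_fromRows_eq_fromCols_conjTranspose] at h
    rw [Matrix.fromRows_mul, Matrix.fromRows_mul_fromCols] at h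
    simpa using h
  -- Step 3 : add them
  have hM2f : (-(fromBlocks ((s₁ / μ) • S + Rb) Rt Rtᵀ
      (-(2 : ℝ) • (1 : Matrix (Fin m) (Fin m) ℝ)))).PosSemidef := by
    have h := hM2.add hCorr
    have heq : -(fromBlocks (μ⁻¹ • (S * S) + Rb) Rt Rtᵀ
          (-(2 : ℝ) • (1 : Matrix (Fin m) (Fin m) ℝ)))
        + fromBlocks (μ⁻¹ • (S * S) - (s₁ / μ) • S) 0 0 0
        = -(fromBlocks ((s₁ / μ) • S + Rb) Rt Rtᵀ (-(2 : ℝ) • 1)) := by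
      simp only [Matrix.fromBlocks_neg, Matrix.fromBlocks_add]
      refine Matrix.fromBlocks_inj.2 ⟨by abel, by abel, by abel, by abel⟩
    rwa [heq] at h
  -- Step 4 : congruence with T
  set c : ℝ := α / (β - α) with hc
  have e1 : (α + β) / (β - α) = 2 * c + 1 := by rw [hc]; field_simp; ring
  have e2 : 2 * α * β / (β - α) ^ 2 = 2 * c ^ 2 + 2 * c := by rw [hc]; field_simp; ring
  have h := hM2f.conjTranspose_mul_mul_same
    (fromBlocks S⁻¹ (0 : Matrix (Fin n) (Fin m) ℝ)
      (c • (Wminᵀ * S⁻¹) - α • W1) (1 : Matrix (Fin m) (Fin m) ℝ))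
  have hcalc2 : (fromBlocks S⁻¹ (0 : Matrix (Fin n) (Fin m) ℝ)
        (c • (Wminᵀ * S⁻¹) - α • W1) (1 : Matrix (Fin m) (Fin m) ℝ))ᴴ *
      (-(fromBlocks ((s₁ / μ) • S + Rb) Rt Rtᵀ
        (-(2 : ℝ) • (1 : Matrix (Fin m) (Fin m) ℝ)))) *
      (fromBlocks S⁻¹ (0 : Matrix (Fin n) (Fin m) ℝ)
        (c • (Wminᵀ * S⁻¹) - α • W1) (1 : Matrix (Fin m) (Fin m) ℝ))
      = -(Matrix.fromBlocks
        ((A + g * (Y * S⁻¹))ᵀ * S⁻¹ + S⁻¹ * (A + g * (Y * S⁻¹))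
            + (s₁ / μ) • S⁻¹ - (2 * α * β) • (W1ᵀ * W1))
        (S⁻¹ * Wmin + (α + β) • W1ᵀ)
        ((S⁻¹ * Wmin + (α + β) • W1ᵀ)ᵀ)
        (-(2 : ℝ) • (1 : Matrix (Fin m) (Fin m) ℝ))) := by
    rw [Matrix.mul_neg, Matrix.neg_mul, neg_inj]
    rw [Matrix.fromBlocks_conjTranspose]
    simp only [Matrix.conjTranspose_eq_transpose_of_trivial, hRb, hRtdef]
    rw [Matrix.fromBlocks_multiply, Matrix.fromBlocks_multiply]
    refine Matrix.fromBlocks_inj.2 ⟨?_, ?_, ?_, ?_⟩ <;>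
    · simp only [transpose_add, transpose_sub, transpose_smul, transpose_mul,
        transpose_transpose, transpose_one, transpose_zero, hSt, hPt,
        Matrix.mul_add, Matrix.add_mul, Matrix.sub_mul, Matrix.mul_sub,
        Matrix.smul_mul, Matrix.mul_smul, Matrix.neg_mul, Matrix.mul_neg,
        mul_add, add_mul, sub_mul, mul_sub, smul_add, smul_sub, smul_smul,
        smul_mul_assoc, mul_smul_comm, neg_mul, mul_neg, neg_smul, smul_neg,
        Matrix.mul_assoc, Matrix.mul_one, Matrix.one_mul, Matrix.mul_zero,
        Matrix.zero_mul, add_zero, zero_add, hPSx, hSPx, hPS, hSP]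
      try simp only [e1, e2]
      obtain ⟨d', hd7⟩ : ∃ x, β - α = x := ⟨_, rfl⟩
      have e6 : α = c * d' := by
        rw [← hd7, hc, div_mul_cancel₀ _ hd]
      have e7 : β = c * d' + d' := by
        rw [← hd7, hc, div_mul_cancel₀ _ hd]; ring
      try simp only [hd7]
      try simp only [e6, e7]
      match_scalars <;> ring
  rwa [hcalc2] at h
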